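/- Let (k_i)_{i≥1} be a sequence of positive integers satisfying condition (★). Then there exist a strictly increasing sequence of indices (m_j)_{j≥1}, linearly independent row vectors v₁, v₂, v₃ ∈ ℝ³, real numbers 0 < λ₃ < 1 < λ₂ ≤ λ₁, and a constant C > 0 such that, writing P_j = A_{k_1} A_{k_2} ⋯ A_{k_{m_j}}, for all j ≥ 1: ‖v₁ P_j‖ ≥ C λ₁^j, ‖v₂ P_j‖ ≥ C λ₂^j, and ‖v₃ P_j‖ ≤ C^{-1} λ₃^j (row vectors multiplied on the left of the matrix products). In other words, the infinite matrix product A_{k_1} A_{k_2} ⋯ has two expanding directions and one contracting direction (two positive and one negative Lyapunov exponent). -/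

import Mathlib

open Filter Topology MeasureTheory

/-- The substitution `χ_k` on the alphabet `{1,2,3}`, coded as `Fin 3 = {0,1,2}`
(letter 1 ↦ 0, letter 2 ↦ 1, letter 3 ↦ 2):
`χ_k(1) = 2`, `χ_k(2) = 3 1^k`, `χ_k(3) = 3 1^(k-1)`. -/
def chiSub (k : ℕ) : Fin 3 → List (Fin 3) :=
  ![[1], 2 :: List.replicate k 0, 2 :: List.replicate (k - 1) 0]

/-- Extension of `χ_k` to finite words by concatenation. -/
def applyChi (k : ℕ) (w : List (Fin 3)) : List (Fin 3) := w.flatMap (chiSub k)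

/-- `compApply k n w = χ_{k 1} ∘ χ_{k 2} ∘ ⋯ ∘ χ_{k n} (w)`. -/
def compApply (k : ℕ → ℕ) : ℕ → List (Fin 3) → List (Fin 3)
  | 0, w => w
  | n + 1, w => compApply k n (applyChi (k (n + 1)) w)

/-- Condition (★): k_{2i} > 1` for infinitely many `i` and `k_{2i-1} > 1`
for infinitely many `i`. -/
def StarCond (k : ℕ → ℕ) : Prop :=
  (∀ N, ∃ i ≥ N, 1 < k (2 * i)) ∧ (∀ N, ∃ i ≥ N, 1 < k (2 * i - 1))

/-- `w` is a prefix of the infinite sequence `x`. -/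
def IsPrefixSeq (w : List (Fin 3)) (x : ℕ → Fin 3) : Prop :=
  w = List.ofFn fun i : Fin w.length => x i

/-- The left shift `σ`. -/
def shift (x : ℕ → Fin 3) : ℕ → Fin 3 := fun i => x (i + 1)

/-- The closure of the `σ`-orbit of `ρ`: the subshift `X`. -/
def orbitClosure (ρ : ℕ → Fin 3) : Set (ℕ → Fin 3) :=
  closure {y | ∃ n : ℕ, y = fun i => ρ (i + n)}

/-- The matrix `A_k` with real entries, rows `(0,k,k-1)`, `(1,0,0)`, `(0,1,1)`. -/
noncomputable def Amat (k : ℕ) : Matrix (Fin 3) (Fin 3) ℝ :=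
  !![0, (k : ℝ), (k : ℝ) - 1; 1, 0, 0; 0, 1, 1]

/-- `Aprod k n = A_{k_1} A_{k_2} ⋯ A_{k_n}`. -/
noncomputable def Aprod (k : ℕ → ℕ) (n : ℕ) : Matrix (Fin 3) (Fin 3) ℝ :=
  ((List.range n).map fun i => Amat (k (i + 1))).prod

noncomputable def Dmat : Matrix (Fin 3) (Fin 3) ℝ := !![1,0,0;0,1,0;0,0,-1]

noncomputable def Emat (k : ℕ) : Matrix (Fin 3) (Fin 3) ℝ :=
  !![0,1,0; 1,0,(k:ℝ)-1; 1,0,(k:ℝ)]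

noncomputable def Gm (k : ℕ → ℕ) : ℕ → Matrix (Fin 3) (Fin 3) ℝ
  | 0 => 1
  | m+1 => Emat (k (m+1)) * Gm k m

def sv (v : Fin 3 → ℝ) : ℝ := v 0 + v 1 + v 2

lemma Aprod_zero (k : ℕ → ℕ) : Aprod k 0 = 1 := by simp [Aprod]

lemma Aprod_succ (k : ℕ → ℕ) (n : ℕ) :
    Aprod k (n+1) = Aprod k n * Amat (k (n+1)) := by
  simp [Aprod, List.range_succ]

lemma DD : Dmat * Dmat = 1 := by
  rw [Dmat, Matrix.mul_fin_three, Matrix.one_fin_three]; norm_num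

lemma ADE (κ : ℕ) : Amat κ * Dmat * Emat κ = Dmat := by
  rw [Amat, Dmat, Emat, Matrix.mul_fin_three, Matrix.mul_fin_three]
  congr 1 <;> ring

lemma vecMul_Amat (κ : ℕ) (v : Fin 3 → ℝ) :
    Matrix.vecMul v (Amat κ) = ![v 1, (κ:ℝ) * v 0 + v 2, ((κ:ℝ) - 1) * v 0 + v 2] := by
  funext j; fin_cases j <;>
    simp [Amat, Matrix.vecMul, dotProduct, Fin.sum_univ_three, Matrix.vecHead, Matrix.vecTail, Function.comp] <;> ring

lemma vecMul_Dmat (v : Fin 3 → ℝ) :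
    Matrix.vecMul v Dmat = ![v 0, v 1, -(v 2)] := by
  funext j; fin_cases j <;>
    simp [Dmat, Matrix.vecMul, dotProduct, Fin.sum_univ_three, Matrix.vecHead, Matrix.vecTail, Function.comp]

lemma vecMul_Emat (κ : ℕ) (v : Fin 3 → ℝ) :
    Matrix.vecMul v (Emat κ) = ![v 1 + v 2, v 0, ((κ:ℝ)-1) * v 1 + (κ:ℝ) * v 2] := by
  funext j; fin_cases j <;>
    simp [Emat, Matrix.vecMul, dotProduct, Fin.sum_univ_three, Matrix.vecHead, Matrix.vecTail, Function.comp] <;> ring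

lemma sv_vecMul (p : Fin 3 → ℝ) (M : Matrix (Fin 3) (Fin 3) ℝ) :
    sv (Matrix.vecMul p M) = p 0 * sv (M 0) + p 1 * sv (M 1) + p 2 * sv (M 2) := by
  simp [sv, Matrix.vecMul, dotProduct, Fin.sum_univ_three, Matrix.vecHead, Matrix.vecTail, Function.comp]; ring

lemma ADE' (κ : ℕ) (X : Matrix (Fin 3) (Fin 3) ℝ) :
    Amat κ * (Dmat * (Emat κ * X)) = Dmat * X := by
  rw [← mul_assoc, ← mul_assoc, ADE]

lemma Dcancel (X : Matrix (Fin 3) (Fin 3) ℝ) : Dmat * (Dmat * X) = X := by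
  rw [← mul_assoc, DD, one_mul]

lemma key_identity (k : ℕ → ℕ) (m : ℕ) :
    Aprod k m * (Dmat * Gm k m * Dmat) = 1 := by
  induction m with
  | zero =>
      show Aprod k 0 * (Dmat * Gm k 0 * Dmat) = 1
      rw [Aprod_zero]; show (1 : Matrix (Fin 3) (Fin 3) ℝ) * (Dmat * 1 * Dmat) = 1
      rw [one_mul, mul_one, DD]
  | succ m ih =>
      rw [Aprod_succ]
      show Aprod k m * Amat (k (m+1)) * (Dmat * (Emat (k (m+1)) * Gm k m) * Dmat) = 1
      simp only [mul_assoc] at ih ⊢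
      rw [ADE' (k (m+1)) (Gm k m * Dmat)]
      exact ih

lemma GDP (k : ℕ → ℕ) (m : ℕ) : Gm k m * (Dmat * Aprod k m) = Dmat := by
  have h := mul_eq_one_comm.mp (key_identity k m)
  have h2 := congrArg (fun X => Dmat * X) h
  simp only [mul_assoc, mul_one] at h2
  rw [Dcancel] at h2
  exact h2

lemma GDPD (k : ℕ → ℕ) (m : ℕ) : Gm k m * (Dmat * Aprod k m * Dmat) = 1 := by
  have h := GDP k m
  calc Gm k m * (Dmat * Aprod k m * Dmat)
      = Gm k m * (Dmat * Aprod k m) * Dmat := by simp only [mul_assoc]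
    _ = Dmat * Dmat := by rw [h]
    _ = 1 := DD

lemma DPDG (k : ℕ → ℕ) (m : ℕ) : (Dmat * Aprod k m * Dmat) * Gm k m = 1 :=
  mul_eq_one_comm.mp (GDPD k m)

noncomputable def W (k : ℕ → ℕ) (v : Fin 3 → ℝ) (n : ℕ) : Fin 3 → ℝ :=
  Matrix.vecMul v (Aprod k n)

lemma W_zero (k : ℕ → ℕ) (v : Fin 3 → ℝ) : W k v 0 = v := by
  simp [W, Aprod_zero]

lemma W_succ (k : ℕ → ℕ) (v : Fin 3 → ℝ) (n : ℕ) :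
    W k v (n+1) = ![W k v n 1, (k (n+1):ℝ) * W k v n 0 + W k v n 2,
      ((k (n+1):ℝ) - 1) * W k v n 0 + W k v n 2] := by
  rw [W, Aprod_succ, ← Matrix.vecMul_vecMul, vecMul_Amat]; rfl

lemma W_succ_0 (k : ℕ → ℕ) (v : Fin 3 → ℝ) (n : ℕ) :
    W k v (n+1) 0 = W k v n 1 := by rw [W_succ]; simp

lemma W_succ_1 (k : ℕ → ℕ) (v : Fin 3 → ℝ) (n : ℕ) :
    W k v (n+1) 1 = (k (n+1):ℝ) * W k v n 0 + W k v n 2 := by rw [W_succ]; simp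

lemma W_succ_2 (k : ℕ → ℕ) (v : Fin 3 → ℝ) (n : ℕ) :
    W k v (n+1) 2 = ((k (n+1):ℝ) - 1) * W k v n 0 + W k v n 2 := by rw [W_succ]; simp

section Forward
variable {k : ℕ → ℕ} (hpos : ∀ i, 1 ≤ i → 1 ≤ k i)
include hpos

lemma hk1 (n : ℕ) : (1:ℝ) ≤ (k (n+1) : ℝ) := by
  exact_mod_cast hpos (n+1) (Nat.succ_le_succ (Nat.zero_le n))

lemma W_nonneg {v : Fin 3 → ℝ} (hv : ∀ i, 0 ≤ v i) :
    ∀ n i, 0 ≤ W k v n i := by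
  intro n
  induction n with
  | zero => intro i; rw [W_zero]; exact hv i
  | succ n ih =>
      have hk := hk1 hpos n
      intro i; fin_cases i
      · show 0 ≤ W k v (n+1) 0
        rw [W_succ_0]; exact ih 1
      · show 0 ≤ W k v (n+1) 1
        rw [W_succ_1]
        exact add_nonneg (mul_nonneg (le_trans zero_le_one hk) (ih 0)) (ih 2)
      · show 0 ≤ W k v (n+1) 2
        rw [W_succ_2]
        exact add_nonneg (mul_nonneg (by linarith) (ih 0)) (ih 2)

lemma W_c_mono {v : Fin 3 → ℝ} (hv : ∀ i, 0 ≤ v i) :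
    ∀ m n, m ≤ n → W k v m 2 ≤ W k v n 2 := by
  intro m n hmn
  induction n, hmn using Nat.le_induction with
  | base => exact le_refl _
  | succ n hmn ih =>
      have hk := hk1 hpos n
      have := W_nonneg hpos hv n
      rw [W_succ_2]
      nlinarith [this 0, this 2]

lemma W_a_chain {v : Fin 3 → ℝ} (hv : ∀ i, 0 ≤ v i) (n₀ : ℕ)
    (h1 : 1 ≤ W k v n₀ 0) : ∀ s, 1 ≤ W k v (n₀ + 2*s) 0 := by
  intro s
  induction s with
  | zero => simpa using h1
  | succ s ih =>
      have e : n₀ + 2*(s+1) = (n₀ + 2*s + 1) + 1 := by ring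
      rw [e, W_succ_0, W_succ_1]
      have hk := hk1 hpos (n₀ + 2*s)
      have hn := W_nonneg hpos hv (n₀ + 2*s)
      nlinarith [hn 0, hn 2]

lemma W_big_step {v : Fin 3 → ℝ} (hv : ∀ i, 0 ≤ v i) (t : ℕ)
    (hbig : 2 ≤ k (t+1)) :
    W k v t 0 + W k v t 2 ≤ W k v (t+1) 2 := by
  have h2 : (2:ℝ) ≤ (k (t+1) : ℝ) := by exact_mod_cast hbig
  have hn := W_nonneg hpos hv t
  rw [W_succ_2]
  nlinarith [hn 0, hn 2, mul_nonneg (by linarith : (0:ℝ) ≤ (k (t+1):ℝ) - 2) (hn 0)]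

end Forward

section Star
variable {k : ℕ → ℕ} (hstar : StarCond k)
include hstar

lemma star_even : ∀ N, ∃ T, N ≤ T ∧ 1 ≤ T ∧ 2 ≤ k T ∧ T % 2 = 0 := by
  intro N
  obtain ⟨i, hi, hk⟩ := hstar.1 (max N 1)
  exact ⟨2*i, by omega, by omega, hk, by omega⟩

lemma star_odd : ∀ N, ∃ T, N ≤ T ∧ 1 ≤ T ∧ 2 ≤ k T ∧ T % 2 = 1 := by
  intro N
  obtain ⟨i, hi, hk⟩ := hstar.2 (max N 1)
  have h1 : 1 ≤ i := le_trans (le_max_right N 1) hi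
  exact ⟨2*i - 1, by omega, by omega, hk, by omega⟩

lemma star_parity (p : ℕ) : ∀ N, ∃ T, N ≤ T ∧ 1 ≤ T ∧ 2 ≤ k T ∧ T % 2 = p % 2 := by
  intro N
  rcases Nat.mod_two_eq_zero_or_one p with h | h <;> rw [h]
  · exact star_even hstar N
  · exact star_odd hstar N

end Star

def ed (i : Fin 3) : Fin 3 → ℝ := fun l => if l = i then 1 else 0

lemma ed_nonneg (i : Fin 3) : ∀ l, 0 ≤ ed i l := by
  intro l; unfold ed; split <;> norm_num

lemma vecMul_ed (i : Fin 3) (M : Matrix (Fin 3) (Fin 3) ℝ) :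
    Matrix.vecMul (ed i) M = M i := by
  funext j
  fin_cases i <;>
    simp [ed, Matrix.vecMul, dotProduct, Fin.sum_univ_three]

section Forward2
variable {k : ℕ → ℕ} (hpos : ∀ i, 1 ≤ i → 1 ≤ k i) (hstar : StarCond k)
include hpos hstar

lemma c_unbounded {v : Fin 3 → ℝ} (hv : ∀ i, 0 ≤ v i) (n₀ : ℕ)
    (h1 : 1 ≤ W k v n₀ 0) : ∀ s : ℕ, ∃ M, ∀ n, M ≤ n → (s:ℝ) ≤ W k v n 2 := by
  intro s
  induction s with
  | zero => exact ⟨0, fun n _ => by simpa using W_nonneg hpos hv n 2⟩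
  | succ s ih =>
      obtain ⟨M, hM⟩ := ih
      obtain ⟨T, hT, hTone, hbigT, hparT⟩ := star_parity hstar (n₀+1) (max M n₀ + 1)
      have ht1 : T = (T-1) + 1 := by omega
      set t := T - 1 with htdef
      have htn0 : n₀ ≤ t := by omega
      have htM : M ≤ t := by omega
      obtain ⟨s', hs'⟩ : ∃ s', t = n₀ + 2*s' := ⟨(t - n₀)/2, by omega⟩
      have ha : 1 ≤ W k v t 0 := by rw [hs']; exact W_a_chain hpos hv n₀ h1 s'
      have hc : (s:ℝ) ≤ W k v t 2 := hM t htM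
      have hbig : 2 ≤ k (t+1) := by rw [← ht1]; exact hbigT
      have hstep := W_big_step hpos hv t hbig
      refine ⟨t+1, fun n hn => ?_⟩
      have hmono := W_c_mono hpos hv (t+1) n hn
      push_cast
      linarith

lemma P_rowsum_big : ∀ B:ℝ, ∃ M, ∀ n, M ≤ n → ∀ i : Fin 3, B ≤ sv (W k (ed i) n) := by
  intro B
  have seed : ∀ i : Fin 3, ∃ n₀, 1 ≤ W k (ed i) n₀ 0 := by
    intro i; fin_cases i
    · exact ⟨0, by rw [W_zero]; simp [ed]⟩
    · exact ⟨1, by rw [W_succ_0, W_zero]; simp [ed]⟩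
    · refine ⟨2, ?_⟩
      show (1:ℝ) ≤ W k (ed 2) (1+1) 0
      rw [W_succ_0, W_succ_1, W_zero]; simp [ed]
  have H : ∀ i : Fin 3, ∃ M, ∀ n, M ≤ n → B ≤ sv (W k (ed i) n) := by
    intro i
    obtain ⟨n₀, h1⟩ := seed i
    obtain ⟨M, hM⟩ := c_unbounded hpos hstar (ed_nonneg i) n₀ h1 ⌈B⌉₊
    refine ⟨M, fun n hn => ?_⟩
    have h2 := hM n hn
    have hnn := W_nonneg hpos (ed_nonneg i) n
    have h3 : B ≤ (⌈B⌉₊:ℝ) := Nat.le_ceil B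
    have h4 : sv (W k (ed i) n) = W k (ed i) n 0 + W k (ed i) n 1 + W k (ed i) n 2 := rfl
    linarith [hnn 0, hnn 1]
  obtain ⟨M0, h0⟩ := H 0
  obtain ⟨M1, h1⟩ := H 1
  obtain ⟨M2, h2⟩ := H 2
  refine ⟨max M0 (max M1 M2), fun n hn i => ?_⟩
  fin_cases i
  · exact h0 n (le_trans (le_max_left _ _) hn)
  · exact h1 n (le_trans (le_trans (le_max_left _ _) (le_max_right _ _)) hn)
  · exact h2 n (le_trans (le_trans (le_max_right _ _) (le_max_right _ _)) hn)

end Forward2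

noncomputable def R (k : ℕ → ℕ) (m : ℕ) (i : Fin 3) : ℝ := sv (Gm k m i)

lemma Gm_entry (k : ℕ → ℕ) (m : ℕ) (j : Fin 3) :
    Gm k (m+1) 0 j = Gm k m 1 j ∧
    Gm k (m+1) 1 j = Gm k m 0 j + ((k (m+1):ℝ) - 1) * Gm k m 2 j ∧
    Gm k (m+1) 2 j = Gm k m 0 j + (k (m+1):ℝ) * Gm k m 2 j := by
  have h : Gm k (m+1) = Emat (k (m+1)) * Gm k m := rfl
  refine ⟨?_, ?_, ?_⟩ <;>
    · rw [h]
      simp [Emat, Matrix.mul_apply, Fin.sum_univ_three, Matrix.vecHead, Matrix.vecTail]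
      try ring

lemma R_succ (k : ℕ → ℕ) (m : ℕ) :
    R k (m+1) 0 = R k m 1 ∧
    R k (m+1) 1 = R k m 0 + ((k (m+1):ℝ) - 1) * R k m 2 ∧
    R k (m+1) 2 = R k m 0 + (k (m+1):ℝ) * R k m 2 := by
  have h0 := Gm_entry k m 0
  have h1 := Gm_entry k m 1
  have h2 := Gm_entry k m 2
  unfold R sv
  refine ⟨?_, ?_, ?_⟩
  · rw [h0.1, h1.1, h2.1]
  · rw [h0.2.1, h1.2.1, h2.2.1]; ring
  · rw [h0.2.2, h1.2.2, h2.2.2]; ring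

section Gside
variable {k : ℕ → ℕ} (hpos : ∀ i, 1 ≤ i → 1 ≤ k i)
include hpos

omit hpos in
lemma R_zero (i : Fin 3) : R k 0 i = 1 := by
  have : Gm k 0 = 1 := rfl
  fin_cases i <;> simp [R, sv, this, Matrix.one_apply]

lemma R_pos : ∀ m, ∀ i : Fin 3, 1 ≤ R k m i := by
  intro m
  induction m with
  | zero => intro i; rw [R_zero]
  | succ m ih =>
      have hk := hk1 hpos m
      have hs := R_succ k m
      intro i; fin_cases i
      · show 1 ≤ R k (m+1) 0
        rw [hs.1]; exact ih 1
      · show 1 ≤ R k (m+1) 1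
        rw [hs.2.1]; nlinarith [ih 0, ih 2]
      · show 1 ≤ R k (m+1) 2
        rw [hs.2.2]; nlinarith [ih 0, ih 2]

lemma R2_lin : ∀ m : ℕ, (m:ℝ) + 1 ≤ R k m 2 := by
  intro m
  induction m with
  | zero => simp [R_zero]
  | succ m ih =>
      have hk := hk1 hpos m
      rw [(R_succ k m).2.2]
      have h0 := R_pos hpos m 0
      push_cast
      nlinarith

lemma R_chain (X : ℝ) (t : ℕ) (hX : X ≤ R k t 1) :
    ∀ s, (s % 2 = 0 → X ≤ R k (t+s) 1) ∧ (s % 2 = 1 → X ≤ R k (t+s) 0) := by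
  intro s
  induction s with
  | zero => exact ⟨fun _ => by simpa using hX, fun h => by omega⟩
  | succ s ih =>
      have hs := R_succ k (t+s)
      have hk := hk1 hpos (t+s)
      have h2 : (0:ℝ) ≤ R k (t+s) 2 := le_trans zero_le_one (R_pos hpos (t+s) 2)
      constructor
      · intro hpar
        have hodd : s % 2 = 1 := by omega
        have := ih.2 hodd
        have e : t + (s+1) = (t+s) + 1 := by ring
        rw [e, hs.2.1]
        nlinarith
      · intro hpar
        have heven : s % 2 = 0 := by omega
        have := ih.1 heven
        have e : t + (s+1) = (t+s) + 1 := by ring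
        rw [e, hs.1]
        exact this

lemma R_big (T : ℕ) (hT : 1 ≤ T) (hbig : 2 ≤ k T) : (T:ℝ) ≤ R k T 1 := by
  obtain ⟨t, rfl⟩ : ∃ t, T = t + 1 := ⟨T - 1, by omega⟩
  have hs := R_succ k t
  have hk2 : (2:ℝ) ≤ (k (t+1):ℝ) := by exact_mod_cast hbig
  have h0 := R_pos hpos t 0
  have h2 := R2_lin hpos t
  rw [hs.2.1]
  push_cast
  nlinarith

lemma G_rowsum_big (hstar : StarCond k) :
    ∀ B : ℝ, ∃ M, ∀ m, M ≤ m → ∀ i : Fin 3, B ≤ R k m i := by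
  intro B
  obtain ⟨T₁, hT₁, hT₁1, hbig₁, hpar₁⟩ := star_even hstar ⌈B⌉₊
  obtain ⟨T₂, hT₂, hT₂1, hbig₂, hpar₂⟩ := star_odd hstar ⌈B⌉₊
  have hB : B ≤ (⌈B⌉₊:ℝ) := Nat.le_ceil B
  have hBT₁ : B ≤ (T₁:ℝ) := le_trans hB (by exact_mod_cast hT₁)
  have hBT₂ : B ≤ (T₂:ℝ) := le_trans hB (by exact_mod_cast hT₂)
  have hc₁ := R_chain hpos (T₁:ℝ) T₁ (R_big hpos T₁ hT₁1 hbig₁)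
  have hc₂ := R_chain hpos (T₂:ℝ) T₂ (R_big hpos T₂ hT₂1 hbig₂)
  refine ⟨max T₁ (max T₂ ⌈B⌉₊), fun m hm i => ?_⟩
  have hmT₁ : T₁ ≤ m := le_trans (le_max_left _ _) hm
  have hmT₂ : T₂ ≤ m := le_trans (le_trans (le_max_left _ _) (le_max_right _ _)) hm
  have hmB : ⌈B⌉₊ ≤ m := le_trans (le_trans (le_max_right _ _) (le_max_right _ _)) hm
  have e₁ : m = T₁ + (m - T₁) := by omega
  have e₂ : m = T₂ + (m - T₂) := by omega
  fin_cases i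
  · show B ≤ R k m 0
    rcases Nat.mod_two_eq_zero_or_one (m - T₁) with h | h
    · have hodd : (m - T₂) % 2 = 1 := by omega
      have := (hc₂ (m - T₂)).2 hodd
      rw [← e₂] at this; linarith
    · have := (hc₁ (m - T₁)).2 h
      rw [← e₁] at this; linarith
  · show B ≤ R k m 1
    rcases Nat.mod_two_eq_zero_or_one (m - T₁) with h | h
    · have := (hc₁ (m - T₁)).1 h
      rw [← e₁] at this; linarith
    · have heven : (m - T₂) % 2 = 0 := by omega
      have := (hc₂ (m - T₂)).1 heven
      rw [← e₂] at this; linarith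
  · show B ≤ R k m 2
    have := R2_lin hpos m
    have : B ≤ (m:ℝ) + 1 := by
      have : (⌈B⌉₊:ℝ) ≤ (m:ℝ) := by exact_mod_cast hmB
      linarith
    linarith [R2_lin hpos m]

end Gside

def one3 : Fin 3 → ℝ := fun _ => 1

section Cone
variable {k : ℕ → ℕ} (hpos : ∀ i, 1 ≤ i → 1 ≤ k i)
include hpos

lemma Gm_nonneg : ∀ m, ∀ i j : Fin 3, 0 ≤ Gm k m i j := by
  intro m
  induction m with
  | zero =>
      intro i j
      have : Gm k 0 = (1 : Matrix (Fin 3) (Fin 3) ℝ) := rfl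
      rw [this, Matrix.one_apply]
      split <;> norm_num
  | succ m ih =>
      have hk := hk1 hpos m
      intro i j
      have he := Gm_entry k m j
      fin_cases i
      · show 0 ≤ Gm k (m+1) 0 j
        rw [he.1]; exact ih 1 j
      · show 0 ≤ Gm k (m+1) 1 j
        rw [he.2.1]
        exact add_nonneg (ih 0 j) (mul_nonneg (by linarith) (ih 2 j))
      · show 0 ≤ Gm k (m+1) 2 j
        rw [he.2.2]
        exact add_nonneg (ih 0 j) (mul_nonneg (by linarith) (ih 2 j))

lemma exists_p (m : ℕ) : ∀ m', m ≤ m' → ∀ q : Fin 3 → ℝ, (∀ i, 0 ≤ q i) →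
    ∃ p : Fin 3 → ℝ, (∀ i, 0 ≤ p i) ∧
      Matrix.vecMul q (Gm k m') = Matrix.vecMul p (Gm k m) := by
  intro m' hmm'
  induction m', hmm' using Nat.le_induction with
  | base => exact fun q hq => ⟨q, hq, rfl⟩
  | succ m' hm ih =>
      intro q hq
      have hk := hk1 hpos m'
      have hq' : ∀ i, 0 ≤ Matrix.vecMul q (Emat (k (m'+1))) i := by
        rw [vecMul_Emat]
        intro i; fin_cases i <;> simp <;>
          nlinarith [hq 0, hq 1, hq 2]
      obtain ⟨p, hp, he⟩ := ih (Matrix.vecMul q (Emat (k (m'+1)))) hq'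
      refine ⟨p, hp, ?_⟩
      have hG : Gm k (m'+1) = Emat (k (m'+1)) * Gm k m' := rfl
      rw [hG, ← Matrix.vecMul_vecMul, he]

end Cone

def mseq (M : ℕ → ℕ) : ℕ → ℕ
  | 0 => max (M 0) 1
  | j+1 => max (M (j+1)) (mseq M j + 1)

lemma mseq_strictMono (M : ℕ → ℕ) : StrictMono (mseq M) :=
  strictMono_nat_of_lt_succ fun j => by
    have : mseq M j + 1 ≤ mseq M (j+1) := le_max_right _ _
    omega

lemma mseq_ge_one (M : ℕ → ℕ) : ∀ j, 1 ≤ mseq M j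
  | 0 => le_max_right _ _
  | j+1 => by have : mseq M j + 1 ≤ mseq M (j+1) := le_max_right _ _; omega

lemma mseq_ge (M : ℕ → ℕ) : ∀ j, M j ≤ mseq M j
  | 0 => le_max_left _ _
  | j+1 => le_max_left _ _

lemma lin_indep_aux (v : Fin 3 → ℝ) (l : Fin 3) (hl : v l ≠ 0) :
    ∃ a b : Fin 3, LinearIndependent ℝ ![ed a, ed b, v] := by
  have key : ∀ a b : Fin 3,
      (Matrix.of ![ed a, ed b, v]).det ≠ 0 → LinearIndependent ℝ ![ed a, ed b, v] := by
    intro a b hdet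
    have hU : IsUnit (Matrix.of ![ed a, ed b, v]) :=
      (Matrix.isUnit_iff_isUnit_det _).mpr (isUnit_iff_ne_zero.mpr hdet)
    have := Matrix.linearIndependent_rows_iff_isUnit.mpr hU
    exact this
  fin_cases l
  · refine ⟨1, 2, key 1 2 ?_⟩
    rw [Matrix.det_fin_three]
    simp [ed, Matrix.of_apply]
    simpa using hl
  · refine ⟨0, 2, key 0 2 ?_⟩
    rw [Matrix.det_fin_three]
    simp [ed, Matrix.of_apply]
    simpa using hl
  · refine ⟨0, 1, key 0 1 ?_⟩
    rw [Matrix.det_fin_three]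
    simp [ed, Matrix.of_apply]
    simpa using hl

/-- the infinite product `A_{k_1} A_{k_2} ⋯` has two expanding and one
contracting direction: along a strictly increasing sequence of indices `m_j` there are
linearly independent row vectors `v₁, v₂, v₃`, numbers `0 < λ₃ < 1 < λ₂ ≤ λ₁` and `C > 0`
with `‖v₁ P_j‖ ≥ C λ₁^j`, `‖v₂ P_j‖ ≥ C λ₂^j`, `‖v₃ P_j‖ ≤ C⁻¹ λ₃^j`
for `P_j = A_{k_1} ⋯ A_{k_{m_j}}`. -/
theorem statement6 (k : ℕ → ℕ) (hpos : ∀ i, 1 ≤ i → 1 ≤ k i) (hstar : StarCond k) :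
    ∃ m : ℕ → ℕ, StrictMono m ∧ (∀ j, 1 ≤ m j) ∧
      ∃ v₁ v₂ v₃ : Fin 3 → ℝ, LinearIndependent ℝ ![v₁, v₂, v₃] ∧
        ∃ lam₁ lam₂ lam₃ C : ℝ,
          0 < lam₃ ∧ lam₃ < 1 ∧ 1 < lam₂ ∧ lam₂ ≤ lam₁ ∧ 0 < C ∧
          ∀ j : ℕ, 1 ≤ j →
            C * lam₁ ^ j ≤ ‖Matrix.vecMul v₁ (Aprod k (m j))‖ ∧
            C * lam₂ ^ j ≤ ‖Matrix.vecMul v₂ (Aprod k (m j))‖ ∧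
            ‖Matrix.vecMul v₃ (Aprod k (m j))‖ ≤ C⁻¹ * lam₃ ^ j := by
  classical
  -- growth thresholds
  have hQ : ∀ j : ℕ, ∃ M, ∀ n, M ≤ n →
      ((∀ i : Fin 3, (3 * 2^j : ℝ) ≤ sv (W k (ed i) n)) ∧
       (∀ i : Fin 3, ((2:ℝ)^j) ≤ R k n i)) := by
    intro j
    obtain ⟨M1, h1⟩ := P_rowsum_big hpos hstar (3 * 2^j)
    obtain ⟨M2, h2⟩ := G_rowsum_big hpos hstar ((2:ℝ)^j)
    exact ⟨max M1 M2, fun n hn =>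
      ⟨h1 n (le_trans (le_max_left _ _) hn), h2 n (le_trans (le_max_right _ _) hn)⟩⟩
  choose Mf hMf using hQ
  set m := mseq Mf with hm
  -- the u sequence
  set T : ℕ → ℝ := fun n => sv (Matrix.vecMul one3 (Gm k n)) with hT
  have hTval : ∀ n, T n = R k n 0 + R k n 1 + R k n 2 := by
    intro n
    have h := sv_vecMul one3 (Gm k n)
    have e : ∀ i : Fin 3, sv (Gm k n i) = R k n i := fun _ => rfl
    rw [hT]
    simp only [h, e, one3, one_mul]
  have hT3 : ∀ n, (3:ℝ) ≤ T n := by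
    intro n
    rw [hTval n]
    linarith [R_pos hpos n 0, R_pos hpos n 1, R_pos hpos n 2]
  have hTpos : ∀ n, 0 < T n := fun n => lt_of_lt_of_le (by norm_num) (hT3 n)
  set u : ℕ → (Fin 3 → ℝ) := fun n => (T n)⁻¹ • Matrix.vecMul one3 (Gm k n) with hu
  have hvec_nn : ∀ n i, 0 ≤ Matrix.vecMul one3 (Gm k n) i := by
    intro n i
    have h0 := Gm_nonneg hpos n 0 i
    have h1 := Gm_nonneg hpos n 1 i
    have h2 := Gm_nonneg hpos n 2 i
    simp only [Matrix.vecMul, dotProduct, Fin.sum_univ_three, one3, one_mul]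
    linarith
  have hu_nn : ∀ n i, 0 ≤ u n i := by
    intro n i
    rw [hu]
    simp only [Pi.smul_apply, smul_eq_mul]
    exact mul_nonneg (inv_nonneg.mpr (le_of_lt (hTpos n))) (hvec_nn n i)
  have hu_sum : ∀ n, sv (u n) = 1 := by
    intro n
    rw [hu]
    simp only [sv, Pi.smul_apply, smul_eq_mul]
    rw [← mul_add, ← mul_add]
    have : Matrix.vecMul one3 (Gm k n) 0 + Matrix.vecMul one3 (Gm k n) 1 +
        Matrix.vecMul one3 (Gm k n) 2 = T n := rfl
    rw [this]
    exact inv_mul_cancel₀ (ne_of_gt (hTpos n))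
  have hu_norm : ∀ n, u n ∈ Metric.closedBall (0 : Fin 3 → ℝ) 1 := by
    intro n
    rw [mem_closedBall_zero_iff]
    refine (pi_norm_le_iff_of_nonneg zero_le_one).mpr fun i => ?_
    rw [Real.norm_eq_abs, abs_of_nonneg (hu_nn n i)]
    have hsum := hu_sum n
    have e : sv (u n) = u n 0 + u n 1 + u n 2 := rfl
    rw [e] at hsum
    have h0' := hu_nn n 0
    have h1' := hu_nn n 1
    have h2' := hu_nn n 2
    fin_cases i
    · show u n 0 ≤ 1; linarith
    · show u n 1 ≤ 1; linarith
    · show u n 2 ≤ 1; linarith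
  obtain ⟨y₀, -, φ, hφ, hconv⟩ :=
    (isCompact_closedBall (0 : Fin 3 → ℝ) 1).tendsto_subseq hu_norm
  have hcoord : ∀ i : Fin 3, Tendsto (fun t => u (φ t) i) atTop (𝓝 (y₀ i)) :=
    fun i => ((continuous_apply i).tendsto y₀).comp hconv
  have hy0_nn : ∀ i, 0 ≤ y₀ i := fun i =>
    ge_of_tendsto (hcoord i) (Eventually.of_forall fun t => hu_nn (φ t) i)
  have hy0_sum : sv y₀ = 1 := by
    have hsv : Continuous fun v : Fin 3 → ℝ => sv v :=
      ((continuous_apply 0).add (continuous_apply 1)).add (continuous_apply 2)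
    have h1 : Tendsto (fun t => sv (u (φ t))) atTop (𝓝 (sv y₀)) :=
      (hsv.tendsto y₀).comp hconv
    have h2 : (fun t => sv (u (φ t))) = fun _ => (1:ℝ) := funext fun t => hu_sum (φ t)
    rw [h2] at h1
    exact tendsto_nhds_unique h1 tendsto_const_nhds
  -- the z vectors
  set z : ℕ → (Fin 3 → ℝ) := fun n => Matrix.vecMul y₀ (Dmat * Aprod k n * Dmat) with hz
  have hz_lim : ∀ n (i : Fin 3),
      Tendsto (fun t => Matrix.vecMul (u (φ t)) (Dmat * Aprod k n * Dmat) i)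
        atTop (𝓝 (z n i)) := by
    intro n i
    have cont : Continuous fun v : Fin 3 → ℝ =>
        Matrix.vecMul v (Dmat * Aprod k n * Dmat) i := by
      simp only [Matrix.vecMul, dotProduct]
      exact continuous_finset_sum _ fun l _ => (continuous_apply l).mul continuous_const
    exact (cont.tendsto y₀).comp hconv
  have hz_nn : ∀ n i, 0 ≤ z n i := by
    intro n i
    refine ge_of_tendsto (hz_lim n i) ?_
    refine eventually_atTop.mpr ⟨n, fun t ht => ?_⟩
    have hφt : n ≤ φ t := le_trans ht hφ.le_apply
    obtain ⟨p, hp, hpe⟩ := exists_p hpos n (φ t) hφt one3 (fun _ => zero_le_one)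
    have h1 : Matrix.vecMul (u (φ t)) (Dmat * Aprod k n * Dmat)
        = (T (φ t))⁻¹ • p := by
      rw [hu]
      simp only []
      rw [Matrix.smul_vecMul, hpe, Matrix.vecMul_vecMul, GDPD k n, Matrix.vecMul_one]
    rw [h1]
    simp only [Pi.smul_apply, smul_eq_mul]
    exact mul_nonneg (inv_nonneg.mpr (le_of_lt (hTpos (φ t)))) (hp i)
  have hz_G : ∀ n, Matrix.vecMul (z n) (Gm k n) = y₀ := by
    intro n
    rw [hz]
    simp only []
    rw [Matrix.vecMul_vecMul, DPDG k n, Matrix.vecMul_one]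
  have hz_bound : ∀ n (B : ℝ), 0 < B → (∀ i : Fin 3, B ≤ R k n i) →
      ∀ i, z n i ≤ B⁻¹ := by
    intro n B hB hR i
    have hsum := sv_vecMul (z n) (Gm k n)
    rw [hz_G n, hy0_sum] at hsum
    have e : ∀ i : Fin 3, sv (Gm k n i) = R k n i := fun _ => rfl
    rw [e 0, e 1, e 2] at hsum
    have hterm : ∀ i : Fin 3, 0 ≤ z n i * R k n i := fun i =>
      mul_nonneg (hz_nn n i) (le_trans zero_le_one (R_pos hpos n i))
    have hiB : z n i * B ≤ 1 := by
      fin_cases i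
      · show z n 0 * B ≤ 1
        nlinarith [hterm 1, hterm 2, mul_le_mul_of_nonneg_left (hR 0) (hz_nn n 0)]
      · show z n 1 * B ≤ 1
        nlinarith [hterm 0, hterm 2, mul_le_mul_of_nonneg_left (hR 1) (hz_nn n 1)]
      · show z n 2 * B ≤ 1
        nlinarith [hterm 0, hterm 1, mul_le_mul_of_nonneg_left (hR 2) (hz_nn n 2)]
    have h2 : z n i ≤ 1 / B := by
      rw [le_div_iff₀ hB]; linarith
    rwa [one_div] at h2
  -- v₃ and its contraction
  set v₃ : Fin 3 → ℝ := Matrix.vecMul y₀ Dmat with hv₃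
  have hv₃P : ∀ n, Matrix.vecMul v₃ (Aprod k n) = Matrix.vecMul (z n) Dmat := by
    intro n
    rw [hv₃, hz]
    simp only []
    rw [Matrix.vecMul_vecMul, Matrix.vecMul_vecMul]
    congr 1
    rw [mul_assoc (Dmat * Aprod k n), DD, mul_one]
  -- nonzero coordinate of y₀
  have hy0_ne : ∃ l, y₀ l ≠ 0 := by
    by_contra h
    push_neg at h
    have : sv y₀ = 0 := by simp [sv, h 0, h 1, h 2]
    rw [hy0_sum] at this
    norm_num at this
  obtain ⟨l, hl⟩ := hy0_ne
  have hv₃l : v₃ l ≠ 0 := by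
    rw [hv₃, vecMul_Dmat]
    fin_cases l
    · simpa using hl
    · simpa using hl
    · simpa using hl
  obtain ⟨a, b, hli⟩ := lin_indep_aux v₃ l hv₃l
  refine ⟨m, mseq_strictMono Mf, mseq_ge_one Mf, ed a, ed b, v₃, hli,
    2, 2, 1/2, 1, by norm_num, by norm_num, by norm_num, le_refl 2, by norm_num, ?_⟩
  intro j _
  obtain ⟨hP, hG⟩ := hMf j (m j) (mseq_ge Mf j)
  have norm_ge : ∀ i : Fin 3, (2:ℝ)^j ≤ ‖Matrix.vecMul (ed i) (Aprod k (m j))‖ := by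
    intro i
    have h1 := hP i
    set w := Matrix.vecMul (ed i) (Aprod k (m j)) with hw
    have hWw : sv (W k (ed i) (m j)) = w 0 + w 1 + w 2 := rfl
    have hb : ∀ jj : Fin 3, w jj ≤ ‖w‖ := fun jj =>
      le_trans (le_abs_self _) (by rw [← Real.norm_eq_abs]; exact norm_le_pi_norm w jj)
    rw [hWw] at h1
    linarith [hb 0, hb 1, hb 2]
  refine ⟨?_, ?_, ?_⟩
  · rw [one_mul]; exact norm_ge a
  · rw [one_mul]; exact norm_ge b
  · have hzb := hz_bound (m j) ((2:ℝ)^j) (by positivity) hG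
    rw [hv₃P, vecMul_Dmat]
    have he : (1:ℝ)⁻¹ * (1/2)^j = ((2:ℝ)^j)⁻¹ := by
      rw [inv_one, one_mul, one_div, inv_pow]
    rw [he]
    refine (pi_norm_le_iff_of_nonneg (by positivity)).mpr fun i => ?_
    fin_cases i
    · show ‖z (m j) 0‖ ≤ ((2:ℝ)^j)⁻¹
      rw [Real.norm_eq_abs, abs_of_nonneg (hz_nn _ _)]; exact hzb 0
    · show ‖z (m j) 1‖ ≤ ((2:ℝ)^j)⁻¹
      rw [Real.norm_eq_abs, abs_of_nonneg (hz_nn _ _)]; exact hzb 1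
    · show ‖-(z (m j) 2)‖ ≤ ((2:ℝ)^j)⁻¹
      rw [norm_neg, Real.norm_eq_abs, abs_of_nonneg (hz_nn _ _)]; exact hzb 2
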